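/- Let C1 and C2 be bar-complexes with ki bars each, of which ei are even and oi are odd (ei + oi = ki). Then C1 ⊗ C2 is a bar-complex with e1 + e2 + k1·k2 even bars and o1 + o2 + k1·k2 odd bars. -/

import Mathlib

open TensorProduct Module

lemma zmod2_add_self {M : Type*} [AddCommGroup M] [Module (ZMod 2) M] (x : M) :
    x + x = 0 := by
  calc x + x = (2 : ZMod 2) • x := (two_smul _ x).symm
  _ = (0 : ZMod 2) • x := by rw [show (2 : ZMod 2) = 0 by decide]
  _ = 0 := zero_smul _ x

lemma tmap_inj {V V' W W' : Type*} [AddCommGroup V] [Module (ZMod 2) V]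
    [AddCommGroup V'] [Module (ZMod 2) V'] [AddCommGroup W] [Module (ZMod 2) W]
    [AddCommGroup W'] [Module (ZMod 2) W'] {f : V →ₗ[ZMod 2] W} {g : V' →ₗ[ZMod 2] W'}
    (hf : Function.Injective f) (hg : Function.Injective g) :
    Function.Injective (TensorProduct.map f g) := by
  rw [← LinearMap.rTensor_comp_lTensor]
  exact (Module.Flat.rTensor_preserves_injective_linearMap f hf).comp
    (Module.Flat.lTensor_preserves_injective_linearMap g hg)

lemma inj_comp_subtype {M N : Type*} [AddCommGroup M] [Module (ZMod 2) M]
    [AddCommGroup N] [Module (ZMod 2) N] (c : M →ₗ[ZMod 2] N) (p : Submodule (ZMod 2) M)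
    (h : Disjoint p (LinearMap.ker c)) : Function.Injective (c ∘ₗ p.subtype) := by
  rw [← LinearMap.ker_eq_bot, LinearMap.ker_comp, Submodule.eq_bot_iff]
  rintro ⟨x, hx⟩ hmem
  simp only [Submodule.mem_comap, Submodule.subtype_apply] at hmem
  have hx0 : x ∈ p ⊓ LinearMap.ker c := ⟨hx, hmem⟩
  rw [h.eq_bot] at hx0
  simpa using hx0

lemma tmap_comp {A A' A'' B B' B'' : Type*}
    [AddCommGroup A] [Module (ZMod 2) A] [AddCommGroup A'] [Module (ZMod 2) A']
    [AddCommGroup A''] [Module (ZMod 2) A''] [AddCommGroup B] [Module (ZMod 2) B]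
    [AddCommGroup B'] [Module (ZMod 2) B'] [AddCommGroup B''] [Module (ZMod 2) B'']
    (f2 : A' →ₗ[ZMod 2] A'') (f1 : A →ₗ[ZMod 2] A')
    (g2 : B' →ₗ[ZMod 2] B'') (g1 : B →ₗ[ZMod 2] B')
    (x : TensorProduct (ZMod 2) A B) :
    TensorProduct.map f2 g2 (TensorProduct.map f1 g1 x)
      = TensorProduct.map (f2 ∘ₗ f1) (g2 ∘ₗ g1) x := by
  rw [← LinearMap.comp_apply, ← TensorProduct.map_comp]

set_option maxHeartbeats 1000000 in
set_option synthInstance.maxHeartbeats 400000 in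
lemma rank_lower_bound
    {E1 O1 P Q : Type*}
    [AddCommGroup E1] [Module (ZMod 2) E1] [AddCommGroup O1] [Module (ZMod 2) O1]
    [AddCommGroup P] [Module (ZMod 2) P] [AddCommGroup Q] [Module (ZMod 2) Q]
    [FiniteDimensional (ZMod 2) E1] [FiniteDimensional (ZMod 2) O1]
    [FiniteDimensional (ZMod 2) P] [FiniteDimensional (ZMod 2) Q]
    (f : E1 →ₗ[ZMod 2] O1) (c : O1 →ₗ[ZMod 2] E1)
    (g : P →ₗ[ZMod 2] Q) (h : Q →ₗ[ZMod 2] P)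
    (U1 : Submodule (ZMod 2) E1) (U2 : Submodule (ZMod 2) P)
    (T1 : Submodule (ZMod 2) O1) (V2 : Submodule (ZMod 2) Q)
    (hU1 : Disjoint U1 (LinearMap.ker f)) (hU2 : Disjoint U2 (LinearMap.ker g))
    (hT1 : Disjoint T1 (LinearMap.ker c)) (hV2 : Disjoint V2 (LinearMap.range g)) :
    finrank (ZMod 2) U1 * finrank (ZMod 2) P
      + finrank (ZMod 2) (LinearMap.ker f) * finrank (ZMod 2) U2
      + finrank (ZMod 2) T1 * finrank (ZMod 2) V2
    ≤ finrank (ZMod 2) (LinearMap.range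
        (LinearMap.prod
          ((TensorProduct.map LinearMap.id g).coprod (TensorProduct.map c LinearMap.id))
          ((TensorProduct.map f LinearMap.id).coprod (TensorProduct.map LinearMap.id h))
          : TensorProduct (ZMod 2) E1 P × TensorProduct (ZMod 2) O1 Q →ₗ[ZMod 2]
            TensorProduct (ZMod 2) E1 Q × TensorProduct (ZMod 2) O1 P)) := by
  classical
  set K1 := LinearMap.ker f with hK1
  set M : TensorProduct (ZMod 2) E1 P × TensorProduct (ZMod 2) O1 Q →ₗ[ZMod 2]
      TensorProduct (ZMod 2) E1 Q × TensorProduct (ZMod 2) O1 P :=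
    LinearMap.prod
      ((TensorProduct.map LinearMap.id g).coprod (TensorProduct.map c LinearMap.id))
      ((TensorProduct.map f LinearMap.id).coprod (TensorProduct.map LinearMap.id h)) with hM
  set J : (TensorProduct (ZMod 2) U1 P ×
        (TensorProduct (ZMod 2) K1 U2 × TensorProduct (ZMod 2) T1 V2)) →ₗ[ZMod 2]
      (TensorProduct (ZMod 2) E1 P × TensorProduct (ZMod 2) O1 Q) :=
    LinearMap.prod
      ((TensorProduct.map U1.subtype LinearMap.id) ∘ₗ (LinearMap.fst _ _ _)
        + (TensorProduct.map K1.subtype U2.subtype) ∘ₗ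
            ((LinearMap.fst _ _ _) ∘ₗ (LinearMap.snd _ _ _)))
      ((TensorProduct.map T1.subtype V2.subtype) ∘ₗ
          ((LinearMap.snd _ _ _) ∘ₗ (LinearMap.snd _ _ _))) with hJ
  have hinj : Function.Injective (M ∘ₗ J) := by
    rw [← LinearMap.ker_eq_bot, Submodule.eq_bot_iff]
    rintro ⟨u, w, y⟩ hmem
    rw [LinearMap.mem_ker, LinearMap.comp_apply] at hmem
    set uu : TensorProduct (ZMod 2) E1 P := TensorProduct.map U1.subtype LinearMap.id u with huu
    set ww : TensorProduct (ZMod 2) E1 P := TensorProduct.map K1.subtype U2.subtype w with hww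
    set yy : TensorProduct (ZMod 2) O1 Q := TensorProduct.map T1.subtype V2.subtype y with hyy
    have hJapp : J (u, w, y) = (uu + ww, yy) := by
      simp [hJ, huu, hww, hyy]
    rw [hJapp] at hmem
    have hfst : TensorProduct.map LinearMap.id g (uu + ww)
        + TensorProduct.map c LinearMap.id yy = 0 := congrArg Prod.fst hmem
    have hsnd : TensorProduct.map f LinearMap.id (uu + ww)
        + TensorProduct.map LinearMap.id h yy = 0 := congrArg Prod.snd hmem
    -- Step 1 : y = 0
    set q := (LinearMap.range g).mkQ with hq
    have hy : y = 0 := by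
      have hqg : q ∘ₗ g = 0 := by
        ext x; simp [hq]
      have happ := congrArg (TensorProduct.map (LinearMap.id (R := ZMod 2) (M := E1)) q) hfst
      have e1 : TensorProduct.map (LinearMap.id (R := ZMod 2) (M := E1)) q ∘ₗ
          TensorProduct.map LinearMap.id g = 0 := by
        rw [← TensorProduct.map_comp, hqg, TensorProduct.map_zero_right]
      have e2 : TensorProduct.map (LinearMap.id (R := ZMod 2) (M := E1)) q
          (TensorProduct.map c LinearMap.id yy)
          = TensorProduct.map (c ∘ₗ T1.subtype) (q ∘ₗ V2.subtype) y := by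
        rw [hyy, tmap_comp, tmap_comp]
        simp only [LinearMap.id_comp, LinearMap.comp_id]
      have hz : TensorProduct.map (c ∘ₗ T1.subtype) (q ∘ₗ V2.subtype) y = 0 := by
        rw [map_add] at happ
        rw [← LinearMap.comp_apply, e1, e2] at happ
        simpa using happ
      have hinjy : Function.Injective
          (TensorProduct.map (c ∘ₗ T1.subtype) (q ∘ₗ V2.subtype)) :=
        tmap_inj (inj_comp_subtype c T1 hT1)
          (inj_comp_subtype q V2 (by rwa [hq, Submodule.ker_mkQ]))
      exact hinjy (by simpa using hz)
    -- Step 2 : u = 0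
    have hu : u = 0 := by
      have hyy0 : yy = 0 := by rw [hyy, hy, map_zero]
      have e3 : TensorProduct.map f LinearMap.id uu
          = TensorProduct.map (f ∘ₗ U1.subtype) LinearMap.id u := by
        rw [huu, tmap_comp]
        simp only [LinearMap.id_comp, LinearMap.comp_id]
      have e4 : TensorProduct.map f LinearMap.id ww = 0 := by
        rw [hww, tmap_comp]
        have hz : f ∘ₗ K1.subtype = 0 := by ext ⟨x, hx⟩; simpa [hK1] using hx
        rw [hz, TensorProduct.map_zero_left]
        exact rfl
      rw [map_add, e3, e4, hyy0, map_zero, add_zero, add_zero] at hsnd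
      have hidinj : Function.Injective (LinearMap.id (R := ZMod 2) (M := P)) :=
        fun a b hab => hab
      have hinju : Function.Injective
          (TensorProduct.map (f ∘ₗ U1.subtype) (LinearMap.id (R := ZMod 2) (M := P))) :=
        tmap_inj (inj_comp_subtype f U1 hU1) hidinj
      exact hinju (by simpa using hsnd)
    -- Step 3 : w = 0
    have hw : w = 0 := by
      have huu0 : uu = 0 := by rw [huu, hu, map_zero]
      have hyy0 : yy = 0 := by rw [hyy, hy, map_zero]
      have e5 : TensorProduct.map LinearMap.id g ww
          = TensorProduct.map K1.subtype (g ∘ₗ U2.subtype) w := by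
        rw [hww, tmap_comp]
        simp only [LinearMap.id_comp, LinearMap.comp_id]
      rw [map_add, huu0, map_zero, zero_add, e5, hyy0, map_zero, add_zero] at hfst
      have hinjw : Function.Injective
          (TensorProduct.map K1.subtype (g ∘ₗ U2.subtype)) :=
        tmap_inj K1.injective_subtype (inj_comp_subtype g U2 hU2)
      exact hinjw (by simpa using hfst)
    simp [hu, hw, hy, Prod.ext_iff]
  have hrange : LinearMap.range (M ∘ₗ J) ≤ LinearMap.range M :=
    LinearMap.range_comp_le_range J M
  have hfr : finrank (ZMod 2) (LinearMap.range (M ∘ₗ J))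
      = finrank (ZMod 2) U1 * finrank (ZMod 2) P
        + (finrank (ZMod 2) K1 * finrank (ZMod 2) U2
          + finrank (ZMod 2) T1 * finrank (ZMod 2) V2) := by
    rw [LinearMap.finrank_range_of_inj hinj]
    simp [Module.finrank_prod, Module.finrank_tensorProduct]
  calc finrank (ZMod 2) U1 * finrank (ZMod 2) P
      + finrank (ZMod 2) K1 * finrank (ZMod 2) U2
      + finrank (ZMod 2) T1 * finrank (ZMod 2) V2
      = finrank (ZMod 2) (LinearMap.range (M ∘ₗ J)) := by rw [hfr]; ring
  _ ≤ finrank (ZMod 2) (LinearMap.range M) := Submodule.finrank_mono hrange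

/-- A (parity-)graded chain complex over `𝔽₂` is given by its even part `E`, its odd part
`O`, and the two components `a : E → O`, `b : O → E` of the degree `-1` differential.  It is a
bar-complex with `e` even bars and `o` odd bars if it is the direct sum of a one-dimensional
summand in grading `0` (even) with zero differential, `e` bars `(T → B)` with `B` even, and
`o` bars with `B` odd.  Over a field this is equivalent to the homological conditions below:
`d² = 0`, the homology of the odd part vanishes, the homology of the even part is
one-dimensional, `e` is the rank of `b` (counting bars with even `B`), and `o` is the rank of
`a` (counting bars with odd `B`). -/
def IsGradedBarComplex {E O : Type*} [AddCommGroup E] [Module (ZMod 2) E]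
    [AddCommGroup O] [Module (ZMod 2) O]
    (a : E →ₗ[ZMod 2] O) (b : O →ₗ[ZMod 2] E) (e o : ℕ) : Prop :=
  a ∘ₗ b = 0 ∧ b ∘ₗ a = 0 ∧
  LinearMap.ker b = LinearMap.range a ∧
  LinearMap.range b ≤ LinearMap.ker a ∧
  Module.finrank (ZMod 2) (LinearMap.ker a) =
    Module.finrank (ZMod 2) (LinearMap.range b) + 1 ∧
  Module.finrank (ZMod 2) (LinearMap.range b) = e ∧
  Module.finrank (ZMod 2) (LinearMap.range a) = o

set_option maxHeartbeats 1600000 in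
set_option synthInstance.maxHeartbeats 400000 in
/-- If `C₁`, `C₂` are bar-complexes with `kᵢ = eᵢ + oᵢ` bars, of which `eᵢ` are even and `oᵢ`
odd, then `C₁ ⊗ C₂` (even part `E₁⊗E₂ ⊕ O₁⊗O₂`, odd part `E₁⊗O₂ ⊕ O₁⊗E₂`, differential
`d₁ ⊗ 1 + 1 ⊗ d₂`) is a bar-complex with `e₁ + e₂ + k₁k₂` even bars and `o₁ + o₂ + k₁k₂`
odd bars. -/
theorem stmt_6 {E1 O1 E2 O2 : Type*}
    [AddCommGroup E1] [Module (ZMod 2) E1] [AddCommGroup O1] [Module (ZMod 2) O1]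
    [AddCommGroup E2] [Module (ZMod 2) E2] [AddCommGroup O2] [Module (ZMod 2) O2]
    [FiniteDimensional (ZMod 2) E1] [FiniteDimensional (ZMod 2) O1]
    [FiniteDimensional (ZMod 2) E2] [FiniteDimensional (ZMod 2) O2]
    (a1 : E1 →ₗ[ZMod 2] O1) (b1 : O1 →ₗ[ZMod 2] E1)
    (a2 : E2 →ₗ[ZMod 2] O2) (b2 : O2 →ₗ[ZMod 2] E2)
    (e1 o1 e2 o2 : ℕ)
    (h1 : IsGradedBarComplex a1 b1 e1 o1) (h2 : IsGradedBarComplex a2 b2 e2 o2) :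
    IsGradedBarComplex
      (LinearMap.prod
        ((TensorProduct.map LinearMap.id a2).coprod (TensorProduct.map b1 LinearMap.id))
        ((TensorProduct.map a1 LinearMap.id).coprod (TensorProduct.map LinearMap.id b2))
        : TensorProduct (ZMod 2) E1 E2 × TensorProduct (ZMod 2) O1 O2 →ₗ[ZMod 2]
          TensorProduct (ZMod 2) E1 O2 × TensorProduct (ZMod 2) O1 E2)
      (LinearMap.prod
        ((TensorProduct.map LinearMap.id b2).coprod (TensorProduct.map b1 LinearMap.id))
        ((TensorProduct.map a1 LinearMap.id).coprod (TensorProduct.map LinearMap.id a2))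
        : TensorProduct (ZMod 2) E1 O2 × TensorProduct (ZMod 2) O1 E2 →ₗ[ZMod 2]
          TensorProduct (ZMod 2) E1 E2 × TensorProduct (ZMod 2) O1 O2)
      (e1 + e2 + (e1 + o1) * (e2 + o2))
      (o1 + o2 + (e1 + o1) * (e2 + o2)) := by
  obtain ⟨hab1, hba1, hk1, hr1, hd1, he1, ho1⟩ := h1
  obtain ⟨hab2, hba2, hk2, hr2, hd2, he2, ho2⟩ := h2
  have p1 : ∀ x, a1 (b1 x) = 0 := fun x => by simpa using LinearMap.congr_fun hab1 x
  have p2 : ∀ x, b1 (a1 x) = 0 := fun x => by simpa using LinearMap.congr_fun hba1 x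
  have p3 : ∀ x, a2 (b2 x) = 0 := fun x => by simpa using LinearMap.congr_fun hab2 x
  have p4 : ∀ x, b2 (a2 x) = 0 := fun x => by simpa using LinearMap.congr_fun hba2 x
  set A : TensorProduct (ZMod 2) E1 E2 × TensorProduct (ZMod 2) O1 O2 →ₗ[ZMod 2]
      TensorProduct (ZMod 2) E1 O2 × TensorProduct (ZMod 2) O1 E2 :=
    LinearMap.prod
      ((TensorProduct.map LinearMap.id a2).coprod (TensorProduct.map b1 LinearMap.id))
      ((TensorProduct.map a1 LinearMap.id).coprod (TensorProduct.map LinearMap.id b2)) with hA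
  set B : TensorProduct (ZMod 2) E1 O2 × TensorProduct (ZMod 2) O1 E2 →ₗ[ZMod 2]
      TensorProduct (ZMod 2) E1 E2 × TensorProduct (ZMod 2) O1 O2 :=
    LinearMap.prod
      ((TensorProduct.map LinearMap.id b2).coprod (TensorProduct.map b1 LinearMap.id))
      ((TensorProduct.map a1 LinearMap.id).coprod (TensorProduct.map LinearMap.id a2)) with hB
  have hABzero : A ∘ₗ B = 0 := by
    rw [hA, hB]; ext x y <;> simp [p1, p2, p3, p4, zmod2_add_self]
  have hBAzero : B ∘ₗ A = 0 := by
    rw [hA, hB]; ext x y <;> simp [p1, p2, p3, p4, zmod2_add_self]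
  -- dimension bookkeeping
  have hkera1 : finrank (ZMod 2) (LinearMap.ker a1) = e1 + 1 := by rw [hd1, he1]
  have hkera2 : finrank (ZMod 2) (LinearMap.ker a2) = e2 + 1 := by rw [hd2, he2]
  have hkerb1 : finrank (ZMod 2) (LinearMap.ker b1) = o1 := by rw [hk1, ho1]
  have hkerb2 : finrank (ZMod 2) (LinearMap.ker b2) = o2 := by rw [hk2, ho2]
  have fE1 : finrank (ZMod 2) E1 = o1 + (e1 + 1) := by
    have := LinearMap.finrank_range_add_finrank_ker a1
    rw [ho1, hkera1] at this; omega
  have fE2 : finrank (ZMod 2) E2 = o2 + (e2 + 1) := by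
    have := LinearMap.finrank_range_add_finrank_ker a2
    rw [ho2, hkera2] at this; omega
  have fO1 : finrank (ZMod 2) O1 = e1 + o1 := by
    have := LinearMap.finrank_range_add_finrank_ker b1
    rw [he1, hkerb1] at this; omega
  have fO2 : finrank (ZMod 2) O2 = e2 + o2 := by
    have := LinearMap.finrank_range_add_finrank_ker b2
    rw [he2, hkerb2] at this; omega
  -- complements
  obtain ⟨U1, hU1⟩ := Submodule.exists_isCompl (LinearMap.ker a1)
  obtain ⟨T1, hT1⟩ := Submodule.exists_isCompl (LinearMap.ker b1)
  obtain ⟨U2A, hU2A⟩ := Submodule.exists_isCompl (LinearMap.ker a2)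
  obtain ⟨V2A, hV2A⟩ := Submodule.exists_isCompl (LinearMap.range a2)
  obtain ⟨U2B, hU2B⟩ := Submodule.exists_isCompl (LinearMap.ker b2)
  obtain ⟨V2B, hV2B⟩ := Submodule.exists_isCompl (LinearMap.range b2)
  have fU1 : finrank (ZMod 2) U1 = o1 := by
    have := Submodule.finrank_add_eq_of_isCompl hU1; rw [hkera1, fE1] at this; omega
  have fT1 : finrank (ZMod 2) T1 = e1 := by
    have := Submodule.finrank_add_eq_of_isCompl hT1; rw [hkerb1, fO1] at this; omega
  have fU2A : finrank (ZMod 2) U2A = o2 := by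
    have := Submodule.finrank_add_eq_of_isCompl hU2A; rw [hkera2, fE2] at this; omega
  have fV2A : finrank (ZMod 2) V2A = e2 := by
    have := Submodule.finrank_add_eq_of_isCompl hV2A; rw [ho2, fO2] at this; omega
  have fU2B : finrank (ZMod 2) U2B = e2 := by
    have := Submodule.finrank_add_eq_of_isCompl hU2B; rw [hkerb2, fO2] at this; omega
  have fV2B : finrank (ZMod 2) V2B = o2 + 1 := by
    have := Submodule.finrank_add_eq_of_isCompl hV2B; rw [he2, fE2] at this; omega
  -- rank lower bounds
  have boundA := rank_lower_bound a1 b1 a2 b2 U1 U2A T1 V2A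
    hU1.disjoint.symm hU2A.disjoint.symm hT1.disjoint.symm hV2A.disjoint.symm
  rw [← hA] at boundA
  have boundB := rank_lower_bound a1 b1 b2 a2 U1 U2B T1 V2B
    hU1.disjoint.symm hU2B.disjoint.symm hT1.disjoint.symm hV2B.disjoint.symm
  rw [← hB] at boundB
  rw [fU1, fE2, hkera1, fU2A, fT1, fV2A] at boundA
  rw [fU1, fO2, hkera1, fU2B, fT1, fV2B] at boundB
  -- rank nullity and inclusion
  have hdomA : finrank (ZMod 2) (LinearMap.range A) + finrank (ZMod 2) (LinearMap.ker A)
      = finrank (ZMod 2) E1 * finrank (ZMod 2) E2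
        + finrank (ZMod 2) O1 * finrank (ZMod 2) O2 := by
    have := LinearMap.finrank_range_add_finrank_ker A
    rwa [Module.finrank_prod, Module.finrank_tensorProduct, Module.finrank_tensorProduct] at this
  have hdomB : finrank (ZMod 2) (LinearMap.range B) + finrank (ZMod 2) (LinearMap.ker B)
      = finrank (ZMod 2) E1 * finrank (ZMod 2) O2
        + finrank (ZMod 2) O1 * finrank (ZMod 2) E2 := by
    have := LinearMap.finrank_range_add_finrank_ker B
    rwa [Module.finrank_prod, Module.finrank_tensorProduct, Module.finrank_tensorProduct] at this
  rw [fE1, fE2, fO1, fO2] at hdomA hdomB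
  have hrangeBle : LinearMap.range B ≤ LinearMap.ker A := LinearMap.range_le_ker_iff.mpr hABzero
  have hrangeAle : LinearMap.range A ≤ LinearMap.ker B := LinearMap.range_le_ker_iff.mpr hBAzero
  have hAleB : finrank (ZMod 2) (LinearMap.range A) ≤ finrank (ZMod 2) (LinearMap.ker B) :=
    Submodule.finrank_mono hrangeAle
  -- arithmetic
  obtain ⟨p, hp⟩ : ∃ p, p = (e1 + o1) * (e2 + o2) := ⟨_, rfl⟩
  have eA : o1 * (o2 + (e2 + 1)) + (e1 + 1) * o2 + e1 * e2 = o1 + o2 + p := by rw [hp]; ring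
  have eB : o1 * (e2 + o2) + (e1 + 1) * e2 + e1 * (o2 + 1) = e1 + e2 + p := by rw [hp]; ring
  have eDA : (o1 + (e1 + 1)) * (o2 + (e2 + 1)) + (e1 + o1) * (e2 + o2)
      = (o1 + o2 + p) + (e1 + e2 + p) + 1 := by rw [hp]; ring
  have eDB : (o1 + (e1 + 1)) * (e2 + o2) + (e1 + o1) * (o2 + (e2 + 1))
      = (o1 + o2 + p) + (e1 + e2 + p) := by rw [hp]; ring
  rw [eA] at boundA
  rw [eB] at boundB
  rw [eDA] at hdomA
  rw [eDB] at hdomB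
  have hrB : finrank (ZMod 2) (LinearMap.range B) = e1 + e2 + p := by omega
  have hrA : finrank (ZMod 2) (LinearMap.range A) = o1 + o2 + p := by omega
  have hkerB : finrank (ZMod 2) (LinearMap.ker B) = o1 + o2 + p := by omega
  have hkerA : finrank (ZMod 2) (LinearMap.ker A) = e1 + e2 + p + 1 := by omega
  refine ⟨hABzero, hBAzero, ?_, hrangeBle, ?_, ?_, ?_⟩
  · exact (Submodule.eq_of_le_of_finrank_eq hrangeAle (by rw [hrA, hkerB])).symm
  · rw [hkerA, hrB]
  · rw [hrB, hp]
  · rw [hrA, hp]
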